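/- (Lemma 2.2 (ii) in the Haar-type setting) Under the Haar-type hypotheses, let m ≥ 1 be an integer and let û ∈ H⁺₀. Then the function η(α) := (1/(m+1)) · e₀ᵀ (P(α))^{m+1} e₀ − ∑_k û k · α k is convex on the convex set H⁺₀, and its minimum over H⁺₀ is attained at α̂ := H · D(û)^{1/m} · Hᵀ e₀ (the entrywise m-th root of the nonnegative diagonal of D(û)); i.e., η(α̂) ≤ η(α) for all α ∈ H⁺₀. -/

import Mathlib

open Matrix

lemma young_aux (m : ℕ) (hm : 1 ≤ m) {l u : ℝ} (hl : 0 ≤ l) (hu : 0 ≤ u) :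
    (l ^ ((m:ℝ)⁻¹)) ^ (m+1) / ((m:ℝ)+1) - l * l ^ ((m:ℝ)⁻¹) ≤ u ^ (m+1) / ((m:ℝ)+1) - l * u := by
  have hm0 : (m:ℝ) ≠ 0 := Nat.cast_ne_zero.mpr (by omega)
  have hmpos : (0:ℝ) < m := by
    have : (0:ℕ) < m := by omega
    exact_mod_cast this
  set c : ℝ := l ^ ((m:ℝ)⁻¹) with hc
  have hc0 : 0 ≤ c := Real.rpow_nonneg hl _
  have hcm : c ^ m = l := by
    rw [hc, ← Real.rpow_natCast (l ^ ((m:ℝ)⁻¹)) m, ← Real.rpow_mul hl,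
      inv_mul_cancel₀ hm0, Real.rpow_one]
  have hpq : Real.HolderConjugate (((m:ℝ)+1)/m) ((m:ℝ)+1) := by
    rw [Real.holderConjugate_iff]
    constructor
    · rw [lt_div_iff₀ hmpos]; linarith
    · field_simp
  have hy := Real.young_inequality_of_nonneg (pow_nonneg hc0 m) hu hpq
  have h1 : ((c ^ m : ℝ)) ^ (((m:ℝ)+1)/m) = c ^ (m+1) := by
    rw [← Real.rpow_natCast c m, ← Real.rpow_mul hc0]
    rw [show (m:ℝ) * (((m:ℝ)+1)/m) = ((m+1 : ℕ) : ℝ) by push_cast; field_simp]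
    exact Real.rpow_natCast c (m+1)
  have h2 : (u:ℝ) ^ ((m:ℝ)+1) = u ^ (m+1) := by
    rw [show (m:ℝ)+1 = ((m+1:ℕ):ℝ) by push_cast; ring]
    exact Real.rpow_natCast u (m+1)
  rw [h1, h2] at hy
  have h3 : c ^ (m+1) / (((m:ℝ)+1)/m) = (m:ℝ) * c^(m+1) / ((m:ℝ)+1) := by
    field_simp
  rw [h3] at hy
  rw [← hcm, ← pow_succ]
  have key : (m:ℝ) * c^(m+1)/((m:ℝ)+1) = c^(m+1) - c^(m+1)/((m:ℝ)+1) := by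
    field_simp; ring
  linarith

theorem haar_sg_root_minimizes_entropy {n : ℕ} [NeZero n]
    (M : Fin n → Matrix (Fin n) (Fin n) ℝ)
    (hMsymm : ∀ k, (M k).IsSymm) (hM0 : M 0 = 1)
    (P : (Fin n → ℝ) → Matrix (Fin n) (Fin n) ℝ)
    (hP : ∀ uh, P uh = ∑ k, uh k • M k)
    (hsym : ∀ uh wh : Fin n → ℝ, (P uh).mulVec wh = (P wh).mulVec uh)
    (e0 : Fin n → ℝ) (he0 : e0 = Pi.single 0 1)
    (H : Matrix (Fin n) (Fin n) ℝ) (hH : Hᵀ * H = 1)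
    (hdiag : ∀ k, (Hᵀ * M k * H).IsDiag)
    (m : ℕ) (hm : 1 ≤ m)
    (uh : Fin n → ℝ) (huh : (P uh).PosSemidef)
    (η : (Fin n → ℝ) → ℝ)
    (hη : ∀ α, η α = (1 / ((m : ℝ) + 1)) * (e0 ⬝ᵥ (P α ^ (m + 1)).mulVec e0)
        - ∑ k, uh k * α k)
    (αm : Fin n → ℝ)
    (hαm : αm = (H * Matrix.diagonal
        (fun i => ((Hᵀ * P uh * H) i i) ^ ((m : ℝ)⁻¹)) * Hᵀ).mulVec e0) :
    ConvexOn ℝ {x : Fin n → ℝ | (P x).PosSemidef} η ∧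
      αm ∈ {x : Fin n → ℝ | (P x).PosSemidef} ∧
      ∀ α ∈ {x : Fin n → ℝ | (P x).PosSemidef}, η αm ≤ η α := by
  classical
  have hHHT : H * Hᵀ = 1 := mul_eq_one_comm.mp hH
  have hconjinv : ∀ (A : Matrix (Fin n) (Fin n) ℝ), H * (Hᵀ * A * H) * Hᵀ = A := by
    intro A
    simp only [← Matrix.mul_assoc]
    rw [hHHT, Matrix.one_mul, Matrix.mul_assoc, hHHT, Matrix.mul_one]
  -- P e0 = 1
  have hPe0 : P e0 = 1 := by
    rw [hP, he0]
    rw [Finset.sum_eq_single_of_mem 0 (Finset.mem_univ 0)]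
    · simp [hM0]
    · intro k _ hk
      simp [Pi.single_apply, hk]
  have hPαe0 : ∀ α, (P α).mulVec e0 = α := by
    intro α
    rw [hsym α e0, hPe0, one_mulVec]
  -- the diagonalized entries
  set μ : (Fin n → ℝ) → Fin n → ℝ := fun α i => (Hᵀ * P α * H) i i with hμ
  have hDdiag : ∀ α, Hᵀ * P α * H = Matrix.diagonal (μ α) := by
    intro α
    have hd : (Hᵀ * P α * H).IsDiag := by
      intro i j hij
      rw [hP]
      rw [Matrix.mul_sum, Matrix.sum_mul]
      rw [Matrix.sum_apply]
      refine Finset.sum_eq_zero fun k _ => ?_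
      rw [Matrix.mul_smul, Matrix.smul_mul, Matrix.smul_apply, hdiag k hij, smul_zero]
    exact hd.diagonal_diag.symm
  have hPdiag : ∀ α, P α = H * Matrix.diagonal (μ α) * Hᵀ := by
    intro α
    rw [← hDdiag α, hconjinv]
  set v : Fin n → ℝ := Hᵀ.mulVec e0 with hv
  have hμv : ∀ α i, (Hᵀ.mulVec α) i = μ α i * v i := by
    intro α i
    conv_lhs => rw [← hPαe0 α, mulVec_mulVec]
    rw [show Hᵀ * P α = Matrix.diagonal (μ α) * Hᵀ by
      rw [← Matrix.mul_one (Hᵀ * P α), ← hHHT, ← Matrix.mul_assoc, hDdiag]]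
    rw [← mulVec_mulVec, mulVec_diagonal]
  have hvne : ∀ i, v i ≠ 0 := by
    intro i h0
    have h1 := hμv (H.mulVec (Pi.single i 1)) i
    rw [mulVec_mulVec, hH, one_mulVec, h0, mul_zero] at h1
    simp [Pi.single_apply] at h1
  -- linearity of μ
  have hPlin : ∀ (a b : ℝ) (x y : Fin n → ℝ), P (a • x + b • y) = a • P x + b • P y := by
    intro a b x y
    simp only [hP, Pi.add_apply, Pi.smul_apply, smul_eq_mul, add_smul,
      Finset.sum_add_distrib, Finset.smul_sum, smul_smul]
  have hμlin : ∀ (a b : ℝ) (x y : Fin n → ℝ) (i : Fin n),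
      μ (a • x + b • y) i = a * μ x i + b * μ y i := by
    intro a b x y i
    simp only [hμ, hPlin, Matrix.mul_add, Matrix.add_mul, Matrix.mul_smul, Matrix.smul_mul,
      Matrix.add_apply, Matrix.smul_apply, smul_eq_mul]
  -- PSD characterization
  have hmem : ∀ α, (P α).PosSemidef ↔ ∀ i, 0 ≤ μ α i := by
    intro α
    constructor
    · intro h i
      have h2 := h.conjTranspose_mul_mul_same H
      rw [conjTranspose_eq_transpose_of_trivial, hDdiag] at h2
      exact posSemidef_diagonal_iff.mp h2 i
    · intro h
      rw [hPdiag α]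
      have h2 := (posSemidef_diagonal_iff.mpr h).mul_mul_conjTranspose_same H
      rwa [conjTranspose_eq_transpose_of_trivial] at h2
  have hlam : ∀ i, 0 ≤ μ uh i := (hmem uh).mp huh
  -- quadratic form
  have hquad : ∀ (w : Fin n → ℝ), e0 ⬝ᵥ (H * Matrix.diagonal w * Hᵀ).mulVec e0
      = ∑ i, w i * v i ^ 2 := by
    intro w
    rw [← mulVec_mulVec, ← mulVec_mulVec, dotProduct_mulVec, ← Matrix.mulVec_transpose]
    simp only [dotProduct, mulVec_diagonal]
    exact Finset.sum_congr rfl fun i _ => by rw [← hv]; ring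
  -- powers of a conjugated diagonal matrix
  have hconj : ∀ (w : Fin n → ℝ) (p : ℕ),
      (H * Matrix.diagonal w * Hᵀ) ^ p = H * Matrix.diagonal (fun i => w i ^ p) * Hᵀ := by
    intro w p
    induction p with
    | zero => simp [hHHT]
    | succ p ih =>
      rw [pow_succ, ih, show H * Matrix.diagonal (fun i => w i ^ p) * Hᵀ *
          (H * Matrix.diagonal w * Hᵀ)
          = H * (Matrix.diagonal (fun i => w i ^ p) * (Hᵀ * H) * Matrix.diagonal w) * Hᵀ by
        simp only [Matrix.mul_assoc]]
      rw [hH, Matrix.mul_one, Matrix.diagonal_mul_diagonal]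
      simp [pow_succ]
  have hPpow : ∀ α, e0 ⬝ᵥ ((P α) ^ (m+1)).mulVec e0 = ∑ i, μ α i ^ (m+1) * v i ^ 2 := by
    intro α
    rw [hPdiag α, hconj, hquad]
  -- symmetry of P
  have hPsymm : ∀ α, (P α)ᵀ = P α := by
    intro α
    rw [hP, Matrix.transpose_sum]
    exact Finset.sum_congr rfl fun k _ => by rw [Matrix.transpose_smul, (hMsymm k)]
  -- the linear part
  have hdot : ∀ α, ∑ k, uh k * α k = ∑ i, μ uh i * μ α i * v i ^ 2 := by
    intro α
    have h1 : ∑ k, uh k * α k = uh ⬝ᵥ ((P α).mulVec e0) := by rw [hPαe0]; rfl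
    rw [h1, dotProduct_mulVec, ← Matrix.mulVec_transpose, hPsymm, hsym]
    conv_lhs => rw [← hPαe0 α, mulVec_mulVec]
    rw [show P uh * P α = H * Matrix.diagonal (fun i => μ uh i * μ α i) * Hᵀ by
      rw [hPdiag uh, hPdiag α, show H * Matrix.diagonal (μ uh) * Hᵀ *
          (H * Matrix.diagonal (μ α) * Hᵀ)
          = H * (Matrix.diagonal (μ uh) * (Hᵀ * H) * Matrix.diagonal (μ α)) * Hᵀ by
        simp only [Matrix.mul_assoc]]
      rw [hH, Matrix.mul_one, Matrix.diagonal_mul_diagonal]]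
    rw [dotProduct_comm, hquad]
  -- the η formula
  have hη' : ∀ α, η α = ∑ i, v i ^ 2 * (μ α i ^ (m+1) / ((m:ℝ)+1) - μ uh i * μ α i) := by
    intro α
    rw [hη, hPpow, hdot, Finset.mul_sum, ← Finset.sum_sub_distrib]
    exact Finset.sum_congr rfl fun i _ => by ring
  -- μ at αm
  have hμαm : ∀ i, μ αm i = μ uh i ^ ((m:ℝ)⁻¹) := by
    intro i
    have h2 : Hᵀ.mulVec αm
        = (Matrix.diagonal (fun j => ((Hᵀ * P uh * H) j j) ^ ((m:ℝ)⁻¹))).mulVec (Hᵀ.mulVec e0) := by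
      rw [hαm, mulVec_mulVec, mulVec_mulVec]
      simp only [← Matrix.mul_assoc]
      rw [hH, Matrix.one_mul]
    have h4 := congrFun h2 i
    rw [hμv αm i, mulVec_diagonal] at h4
    exact mul_right_cancel₀ (hvne i) h4
  have hαm_mem : αm ∈ {x : Fin n → ℝ | (P x).PosSemidef} := by
    refine (hmem αm).mpr fun i => ?_
    rw [hμαm i]
    exact Real.rpow_nonneg (hlam i) _
  refine ⟨?_, hαm_mem, ?_⟩
  · -- convexity
    have hS : Convex ℝ {x : Fin n → ℝ | (P x).PosSemidef} := by
      intro x hx y hy a b ha hb hab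
      have hxi := (hmem x).mp hx
      have hyi := (hmem y).mp hy
      refine (hmem _).mpr fun i => ?_
      rw [hμlin]
      have h1 := hxi i
      have h2 := hyi i
      positivity
    refine ⟨hS, ?_⟩
    intro x hx y hy a b ha hb hab
    have hxi := (hmem x).mp hx
    have hyi := (hmem y).mp hy
    simp only [smul_eq_mul]
    rw [hη', hη', hη', Finset.mul_sum, Finset.mul_sum, ← Finset.sum_add_distrib]
    refine Finset.sum_le_sum fun i _ => ?_
    rw [hμlin]
    have hkey : (a * μ x i + b * μ y i) ^ (m+1)
        ≤ a * μ x i ^ (m+1) + b * μ y i ^ (m+1) := by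
      have h := (convexOn_pow (m+1)).2 (Set.mem_Ici.mpr (hxi i)) (Set.mem_Ici.mpr (hyi i))
        ha hb hab
      simpa [smul_eq_mul] using h
    have hm1 : (0:ℝ) ≤ ((m:ℝ)+1)⁻¹ := by positivity
    have hkey2 := mul_le_mul_of_nonneg_left hkey
      (mul_nonneg (sq_nonneg (v i)) hm1)
    rw [div_eq_mul_inv, div_eq_mul_inv, div_eq_mul_inv]
    nlinarith [hkey2]
  · -- minimization
    intro α hα
    rw [hη', hη']
    refine Finset.sum_le_sum fun i _ => ?_
    have hμα : 0 ≤ μ α i := (hmem α).mp hα i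
    rw [hμαm i]
    exact mul_le_mul_of_nonneg_left (young_aux m hm (hlam i) hμα) (sq_nonneg _)
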